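/- Let (X,F,μ) and (Y,G,ν) be probability spaces and H a countable union of measurable rectangles. If P(H) = 0 for every probability measure P on F⊗G with marginals μ and ν, then there exist A∈F and B∈G with μ(A) = ν(B) = 0 and H ⊆ (A×Y) ∪ (X×B). -/

import Mathlib

open MeasureTheory Filter Topology

noncomputable section

variable {X Y : Type*}

/-- `P` is a coupling of `μ` and `ν`: a probability measure on the product
σ-field with marginals `μ` and `ν`. -/
def IsCoupling [MeasurableSpace X] [MeasurableSpace Y]
    (μ : Measure X) (ν : Measure Y) (P : Measure (X × Y)) : Prop :=
  IsProbabilityMeasure P ∧ P.map Prod.fst = μ ∧ P.map Prod.snd = ν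

/-- Values `∫ c dP` as `P` ranges over the couplings of `μ` and `ν`. -/
def primalSet [MeasurableSpace X] [MeasurableSpace Y]
    (μ : Measure X) (ν : Measure Y) (c : X × Y → ℝ) : Set ℝ :=
  {r | ∃ P : Measure (X × Y), IsCoupling μ ν P ∧ r = ∫ z, c z ∂P}

/-- `α(c) = inf_{P ∈ Γ(μ,ν)} ∫ c dP`. -/
def alphaInf [MeasurableSpace X] [MeasurableSpace Y]
    (μ : Measure X) (ν : Measure Y) (c : X × Y → ℝ) : ℝ :=
  sInf (primalSet μ ν c)

/-- `α*(c) = sup_{P ∈ Γ(μ,ν)} ∫ c dP`. -/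
def alphaSup [MeasurableSpace X] [MeasurableSpace Y]
    (μ : Measure X) (ν : Measure Y) (c : X × Y → ℝ) : ℝ :=
  sSup (primalSet μ ν c)

/-- Values `μ(f) + ν(g)` with `f ∈ L¹(μ)`, `g ∈ L¹(ν)` and `f + g ≤ c` pointwise. -/
def dualLowerSet [MeasurableSpace X] [MeasurableSpace Y]
    (μ : Measure X) (ν : Measure Y) (c : X × Y → ℝ) : Set ℝ :=
  {r | ∃ (f : X → ℝ) (g : Y → ℝ), Integrable f μ ∧ Integrable g ν ∧
    (∀ x y, f x + g y ≤ c (x, y)) ∧ r = ∫ x, f x ∂μ + ∫ y, g y ∂ν}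

/-- Values `μ(f) + ν(g)` with `f ∈ L¹(μ)`, `g ∈ L¹(ν)` and `f + g ≥ c` pointwise. -/
def dualUpperSet [MeasurableSpace X] [MeasurableSpace Y]
    (μ : Measure X) (ν : Measure Y) (c : X × Y → ℝ) : Set ℝ :=
  {r | ∃ (f : X → ℝ) (g : Y → ℝ), Integrable f μ ∧ Integrable g ν ∧
    (∀ x y, c (x, y) ≤ f x + g y) ∧ r = ∫ x, f x ∂μ + ∫ y, g y ∂ν}

/-- `β(c) = sup {μ(f)+ν(g) : f + g ≤ c}`. -/
def betaSup [MeasurableSpace X] [MeasurableSpace Y]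
    (μ : Measure X) (ν : Measure Y) (c : X × Y → ℝ) : ℝ :=
  sSup (dualLowerSet μ ν c)

/-- `β*(c) = inf {μ(f)+ν(g) : f + g ≥ c}`. -/
def betaInf [MeasurableSpace X] [MeasurableSpace Y]
    (μ : Measure X) (ν : Measure Y) (c : X × Y → ℝ) : ℝ :=
  sInf (dualUpperSet μ ν c)

/-- Condition (1.1): `f₁ + g₁ ≤ c ≤ f₂ + g₂` with `f₁, f₂ ∈ L¹(μ)`, `g₁, g₂ ∈ L¹(ν)`. -/
def HasIntegrableBounds [MeasurableSpace X] [MeasurableSpace Y]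
    (μ : Measure X) (ν : Measure Y) (c : X × Y → ℝ) : Prop :=
  ∃ (f₁ f₂ : X → ℝ) (g₁ g₂ : Y → ℝ), Integrable f₁ μ ∧ Integrable f₂ μ ∧
    Integrable g₁ ν ∧ Integrable g₂ ν ∧
    ∀ x y, f₁ x + g₁ y ≤ c (x, y) ∧ c (x, y) ≤ f₂ x + g₂ y

/-- Real-valued indicator of a set. -/
def indR (H : Set (X × Y)) : X × Y → ℝ := H.indicator fun _ => (1 : ℝ)

/-- `R` is a finite union of measurable rectangles, i.e. an element of the ring
generated by the measurable rectangles. -/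
def IsRectUnion [MeasurableSpace X] [MeasurableSpace Y] (R : Set (X × Y)) : Prop :=
  ∃ (n : ℕ) (A : Fin n → Set X) (B : Fin n → Set Y),
    (∀ i, MeasurableSet (A i)) ∧ (∀ i, MeasurableSet (B i)) ∧ R = ⋃ i, A i ×ˢ B i

theorem stmt9 [MeasurableSpace X] [MeasurableSpace Y]
    (μ : Measure X) (ν : Measure Y) [IsProbabilityMeasure μ] [IsProbabilityMeasure ν]
    (A : ℕ → Set X) (B : ℕ → Set Y)
    (hA : ∀ n, MeasurableSet (A n)) (hB : ∀ n, MeasurableSet (B n))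
    (H : Set (X × Y)) (hH : H = ⋃ n, A n ×ˢ B n)
    (hnull : ∀ P : Measure (X × Y), IsCoupling μ ν P → P H = 0) :
    ∃ (A' : Set X) (B' : Set Y), MeasurableSet A' ∧ MeasurableSet B' ∧
      μ A' = 0 ∧ ν B' = 0 ∧ H ⊆ (A' ×ˢ (Set.univ : Set Y)) ∪ ((Set.univ : Set X) ×ˢ B') := by
  have hcoup : IsCoupling μ ν (μ.prod ν) := by
    refine ⟨inferInstance, ?_, ?_⟩
    · simp [Measure.map_fst_prod]
    · simp [Measure.map_snd_prod]
  have hP : (μ.prod ν) H = 0 := hnull _ hcoup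
  have hrect : ∀ n, μ (A n) = 0 ∨ ν (B n) = 0 := by
    intro n
    have hle : (μ.prod ν) (A n ×ˢ B n) = 0 := by
      refine le_antisymm ?_ zero_le
      rw [← hP]
      exact measure_mono (by rw [hH]; exact Set.subset_iUnion (fun n => A n ×ˢ B n) n)
    rw [Measure.prod_prod] at hle
    exact mul_eq_zero.mp hle
  classical
  refine ⟨⋃ n, if μ (A n) = 0 then A n else ∅,
    ⋃ n, if μ (A n) = 0 then ∅ else B n, ?_, ?_, ?_, ?_, ?_⟩
  · exact MeasurableSet.iUnion fun n => by split <;> [exact hA n; exact MeasurableSet.empty]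
  · exact MeasurableSet.iUnion fun n => by split <;> [exact MeasurableSet.empty; exact hB n]
  · refine le_antisymm (le_trans (measure_iUnion_le _) ?_) zero_le
    simp only [nonpos_iff_eq_zero, ENNReal.tsum_eq_zero]
    intro n; split <;> simp_all
  · refine le_antisymm (le_trans (measure_iUnion_le _) ?_) zero_le
    simp only [nonpos_iff_eq_zero, ENNReal.tsum_eq_zero]
    intro n
    by_cases h : μ (A n) = 0
    · simp [h]
    · rcases hrect n with h' | h'
      · exact absurd h' h
      · simp [h, h']
  · rw [hH]
    rintro ⟨x, y⟩ hz
    simp only [Set.mem_iUnion, Set.mem_prod] at hz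
    obtain ⟨n, hx, hy⟩ := hz
    by_cases h : μ (A n) = 0
    · left
      exact ⟨Set.mem_iUnion.mpr ⟨n, by simp [h, hx]⟩, Set.mem_univ _⟩
    · right
      exact ⟨Set.mem_univ _, Set.mem_iUnion.mpr ⟨n, by simp [h, hy]⟩⟩
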